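/- arXiv:1807.06176 — 2 statements merged into one kernel-verified Lean document; each statement's English description precedes it below -/
import Mathlib

section
/- For two estimated no-show rates p₁ < p₂ in (0,1), the Kopach show-up functions satisfy q^{p₁}_j > q^{p₂}_j for all j ≥ 0, and consequently T(K; q^{p₁}) ≥ T(K; q^{p₂}) for every K in the M/M/1/K reward model (monotonicity of clinic reward in the no-show rate). -/
/-- For no-show rates `p₁ < p₂` in `(0,1)`, the Kopach show-up functions
satisfy `q^{p₁}_j > q^{p₂}_j` for all `j`, and consequently the M/M/1/K reward
satisfies `T(K; q^{p₁}) ≥ T(K; q^{p₂})` for every `K`. -/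
theorem mm1k_reward_monotone_in_noshow_rate (lam mu ξ θ ρ p₁ p₂ : ℝ)
    (hlam : 0 < lam) (hmu : 0 < mu) (hξ : 0 ≤ ξ) (hθ : 0 ≤ θ)
    (hρ : ρ ∈ Set.Ioo (0:ℝ) 1) (hp₁ : p₁ ∈ Set.Ioo (0:ℝ) 1)
    (hp₂ : p₂ ∈ Set.Ioo (0:ℝ) 1) (hlt : p₁ < p₂) :
    (∀ j : ℕ, 1 - p₂ * (1 - 0.5 * Real.exp (-0.017 * (j : ℝ)))
      < 1 - p₁ * (1 - 0.5 * Real.exp (-0.017 * (j : ℝ)))) ∧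
    ∀ K : ℕ,
      lam * ∑ j ∈ Finset.range K, (1 - ρ) * ρ ^ j / (1 - ρ ^ (K + 1)) *
          (1 - p₂ * (1 - 0.5 * Real.exp (-0.017 * (j : ℝ))))
          + mu * ξ * ((1 - ρ) / (1 - ρ ^ (K + 1)))
          - lam * θ * ((1 - ρ) * ρ ^ K / (1 - ρ ^ (K + 1)))
        ≤ lam * ∑ j ∈ Finset.range K, (1 - ρ) * ρ ^ j / (1 - ρ ^ (K + 1)) *
          (1 - p₁ * (1 - 0.5 * Real.exp (-0.017 * (j : ℝ))))
          + mu * ξ * ((1 - ρ) / (1 - ρ ^ (K + 1)))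
          - lam * θ * ((1 - ρ) * ρ ^ K / (1 - ρ ^ (K + 1))) := by
  have hfac : ∀ j : ℕ, 0 < 1 - 0.5 * Real.exp (-0.017 * (j : ℝ)) := by
    intro j
    have h1 : Real.exp (-0.017 * (j : ℝ)) ≤ 1 := by
      rw [Real.exp_le_one_iff]
      have : (0:ℝ) ≤ (j : ℝ) := Nat.cast_nonneg j
      nlinarith
    nlinarith [Real.exp_pos (-0.017 * (j : ℝ))]
  have hq : ∀ j : ℕ, 1 - p₂ * (1 - 0.5 * Real.exp (-0.017 * (j : ℝ)))
      < 1 - p₁ * (1 - 0.5 * Real.exp (-0.017 * (j : ℝ))) := by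
    intro j
    have := hfac j
    nlinarith
  refine ⟨hq, fun K => ?_⟩
  have hsum : ∑ j ∈ Finset.range K, (1 - ρ) * ρ ^ j / (1 - ρ ^ (K + 1)) *
      (1 - p₂ * (1 - 0.5 * Real.exp (-0.017 * (j : ℝ))))
      ≤ ∑ j ∈ Finset.range K, (1 - ρ) * ρ ^ j / (1 - ρ ^ (K + 1)) *
      (1 - p₁ * (1 - 0.5 * Real.exp (-0.017 * (j : ℝ)))) := by
    apply Finset.sum_le_sum
    intro j _
    have hcoef : 0 ≤ (1 - ρ) * ρ ^ j / (1 - ρ ^ (K + 1)) := by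
      have h1 : 0 ≤ (1 - ρ) * ρ ^ j :=
        mul_nonneg (by linarith [hρ.2]) (pow_nonneg hρ.1.le j)
      have h2 : (0:ℝ) < 1 - ρ ^ (K + 1) := by
        have := pow_lt_one₀ hρ.1.le hρ.2 (n := K + 1) (by omega)
        linarith
      exact div_nonneg h1 h2.le
    exact mul_le_mul_of_nonneg_left (hq j).le hcoef
  have := mul_le_mul_of_nonneg_left hsum hlam.le
  linarith
end

section
/- If q : ℕ → [0,1] is nonincreasing with q_j → 0 as j → ∞, ξ = θ = 0, and ρ ∈ (0,1), then the reward T(K) = λ Σ_{j=0}^{K-1} Π_j(K) q_j attains its supremum over K ∈ ℕ at some finite K* (a finite optimal scheduling window exists), since T(K) → λ(1-ρ)Σ_j ρ^j q_j < ∞ and T(1) > 0 when q_0 > 0. -/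
open Filter

private lemma exists_max_of_tendsto_aux (a : ℕ → ℝ) (L : ℝ)
    (ha : Filter.Tendsto a Filter.atTop (nhds L))
    (h : ∀ᶠ n in Filter.atTop, L ≤ a n) :
    ∃ m, ∀ n, a n ≤ a m := by
  by_cases hb : ∃ m, L < a m
  · obtain ⟨m, hm⟩ := hb
    have hev : ∀ᶠ n in Filter.atTop, a n < a m := ha.eventually_lt_const hm
    obtain ⟨N, hN⟩ := eventually_atTop.1 hev
    obtain ⟨m', hm's, hmax⟩ :=
      (insert m (Finset.range N)).exists_max_image a ⟨m, Finset.mem_insert_self _ _⟩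
    refine ⟨m', fun n => ?_⟩
    rcases lt_or_ge n N with hn | hn
    · exact hmax n (Finset.mem_insert_of_mem (Finset.mem_range.2 hn))
    · exact le_of_lt (lt_of_lt_of_le (hN n hn) (hmax m (Finset.mem_insert_self _ _)))
  · push_neg at hb
    obtain ⟨n, hn⟩ := h.exists
    exact ⟨n, fun k => le_trans (hb k) hn⟩

/-- If `q` is nonincreasing with limit `0`, `q 0 > 0`, and `ξ = θ = 0`, then the
M/M/1/K reward `T(K) = λ ∑_{j<K} Π_j(K) q_j` attains its supremum at some
finite scheduling window `K*`. -/
theorem mm1k_finite_optimal_window (lam ρ : ℝ) (hlam : 0 < lam)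
    (hρ : ρ ∈ Set.Ioo (0:ℝ) 1) (q : ℕ → ℝ) (hq : ∀ j, q j ∈ Set.Icc (0:ℝ) 1)
    (hmono : Antitone q) (hlim : Filter.Tendsto q Filter.atTop (nhds 0))
    (hq0 : 0 < q 0) :
    ∃ Kstar : ℕ, ∀ K : ℕ,
      lam * ∑ j ∈ Finset.range K, (1 - ρ) * ρ ^ j / (1 - ρ ^ (K + 1)) * q j
        ≤ lam * ∑ j ∈ Finset.range Kstar,
            (1 - ρ) * ρ ^ j / (1 - ρ ^ (Kstar + 1)) * q j := by
  obtain ⟨hρ0, hρ1⟩ := hρ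
  have hρ1' : (0:ℝ) < 1 - ρ := by linarith
  set f : ℕ → ℝ := fun j => ρ ^ j * q j with hf
  have hfnn : ∀ j, 0 ≤ f j := fun j => mul_nonneg (pow_nonneg hρ0.le j) (hq j).1
  have hgeo : Summable (fun j : ℕ => ρ ^ j) := summable_geometric_of_lt_one hρ0.le hρ1
  have hsum : Summable f := by
    refine Summable.of_nonneg_of_le hfnn (fun j => ?_) hgeo
    calc ρ ^ j * q j ≤ ρ ^ j * 1 :=
          mul_le_mul_of_nonneg_left (hq j).2 (pow_nonneg hρ0.le j)
      _ = ρ ^ j := mul_one _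
  set S := ∑' j, f j with hS
  have hq0S : q 0 ≤ S := by
    have := Summable.le_tsum hsum 0 (fun j _ => hfnn j)
    simpa [hf] using this
  have hSpos : 0 < S := lt_of_lt_of_le hq0 hq0S
  have hpow : ∀ K : ℕ, 0 < 1 - ρ ^ (K + 1) := fun K => by
    have : ρ ^ (K + 1) < 1 := pow_lt_one₀ hρ0.le hρ1 (Nat.succ_ne_zero K); linarith
  have hrw : ∀ K : ℕ,
      (∑ j ∈ Finset.range K, (1 - ρ) * ρ ^ j / (1 - ρ ^ (K + 1)) * q j)
        = (1 - ρ) / (1 - ρ ^ (K + 1)) * ∑ j ∈ Finset.range K, f j := by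
    intro K
    rw [Finset.mul_sum]
    refine Finset.sum_congr rfl fun j _ => ?_
    simp only [hf]
    ring
  have hSK : Filter.Tendsto (fun K => ∑ j ∈ Finset.range K, f j) Filter.atTop (nhds S) :=
    hsum.hasSum.tendsto_sum_nat
  have hpowlim : Filter.Tendsto (fun K : ℕ => ρ ^ (K + 1)) Filter.atTop (nhds 0) := by
    have h0 := tendsto_pow_atTop_nhds_zero_of_lt_one hρ0.le hρ1
    have := h0.mul_const ρ
    simpa [pow_succ] using this
  set L := lam * ((1 - ρ) * S) with hL
  have hta : Filter.Tendsto
      (fun K : ℕ => lam * ∑ j ∈ Finset.range K, (1 - ρ) * ρ ^ j / (1 - ρ ^ (K + 1)) * q j)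
      Filter.atTop (nhds L) := by
    have hden : Filter.Tendsto (fun K : ℕ => 1 - ρ ^ (K + 1)) Filter.atTop (nhds 1) := by
      simpa using (tendsto_const_nhds (x := (1:ℝ)) (f := Filter.atTop)).sub hpowlim
    have h1 : Filter.Tendsto (fun K : ℕ => (1 - ρ) / (1 - ρ ^ (K + 1)))
        Filter.atTop (nhds (1 - ρ)) := by
      have := (tendsto_const_nhds (x := (1 - ρ)) (f := Filter.atTop)).div hden one_ne_zero
      rw [div_one] at this
      exact this
    have h2 := (h1.mul hSK).const_mul lam
    simp only [hrw]
    exact h2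
  have hev : ∀ᶠ K in Filter.atTop,
      L ≤ lam * ∑ j ∈ Finset.range K, (1 - ρ) * ρ ^ j / (1 - ρ ^ (K + 1)) * q j := by
    have hpos : 0 < q 0 * ρ * (1 - ρ) := by positivity
    have hq_small : ∀ᶠ K in Filter.atTop, q K ≤ q 0 * ρ * (1 - ρ) :=
      (hlim.eventually_lt_const hpos).mono fun K hK => hK.le
    filter_upwards [hq_small] with K hK
    have hadd : (∑ j ∈ Finset.range K, f j) + ∑' i, f (i + K) = S :=
      hsum.sum_add_tsum_nat_add K
    have hle : (∑' i, f (i + K)) ≤ ∑' i : ℕ, ρ ^ K * q K * ρ ^ i := by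
      refine Summable.tsum_le_tsum (fun i => ?_) ((summable_nat_add_iff K).2 hsum) (hgeo.mul_left _)
      have h1 : q (i + K) ≤ q K := hmono (Nat.le_add_left K i)
      calc f (i + K) = ρ ^ (i + K) * q (i + K) := rfl
        _ ≤ ρ ^ (i + K) * q K := mul_le_mul_of_nonneg_left h1 (pow_nonneg hρ0.le _)
        _ = ρ ^ K * q K * ρ ^ i := by rw [pow_add]; ring
    have hgeoval : (∑' i : ℕ, ρ ^ K * q K * ρ ^ i) = ρ ^ K * q K / (1 - ρ) := by
      rw [tsum_mul_left, tsum_geometric_of_lt_one hρ0.le hρ1]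
      field_simp
    have htail : S - (∑ j ∈ Finset.range K, f j) ≤ ρ ^ K * q K / (1 - ρ) := by
      rw [hgeoval] at hle; linarith
    have h1 : ρ ^ K * q K / (1 - ρ) ≤ ρ ^ K * (q 0 * ρ) := by
      rw [div_le_iff₀ hρ1']
      calc ρ ^ K * q K ≤ ρ ^ K * (q 0 * ρ * (1 - ρ)) :=
            mul_le_mul_of_nonneg_left hK (pow_nonneg hρ0.le K)
        _ = ρ ^ K * (q 0 * ρ) * (1 - ρ) := by ring
    have h2 : ρ ^ K * (q 0 * ρ) ≤ S * ρ ^ (K + 1) := by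
      have heq : ρ ^ K * (q 0 * ρ) = q 0 * ρ ^ (K + 1) := by rw [pow_succ]; ring
      rw [heq]
      exact mul_le_mul_of_nonneg_right hq0S (pow_nonneg hρ0.le _)
    have hSK_ge : S * (1 - ρ ^ (K + 1)) ≤ ∑ j ∈ Finset.range K, f j := by nlinarith
    have key : (1 - ρ) * S ≤ (1 - ρ) / (1 - ρ ^ (K + 1)) * (∑ j ∈ Finset.range K, f j) := by
      rw [div_mul_eq_mul_div, le_div_iff₀ (hpow K)]
      calc (1 - ρ) * S * (1 - ρ ^ (K + 1)) = (1 - ρ) * (S * (1 - ρ ^ (K + 1))) := by ring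
        _ ≤ (1 - ρ) * (∑ j ∈ Finset.range K, f j) :=
            mul_le_mul_of_nonneg_left hSK_ge hρ1'.le
        _ = (1 - ρ) * (∑ j ∈ Finset.range K, f j) := rfl
    have := mul_le_mul_of_nonneg_left key hlam.le
    rw [hrw K]
    exact this
  obtain ⟨m, hm⟩ := exists_max_of_tendsto_aux
    (fun K : ℕ => lam * ∑ j ∈ Finset.range K, (1 - ρ) * ρ ^ j / (1 - ρ ^ (K + 1)) * q j)
    L hta hev
  exact ⟨m, hm⟩
end
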